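/- If a formal power series t(x) over ℚ with t(0) = 0 satisfies t·(1−t)^2 = x, then the coefficient of x^{n+1} in t is (1/(n+1))·C(3n+1, n) for all n ≥ 0. -/

import Mathlib

open PowerSeries

lemma aux_choose (n : ℕ) : ((3*n+4).choose (n+1) : ℚ) * (2*(2*n+3)*(n+1)) =
    3*(3*n+2)*(3*n+4) * ((3*n+1).choose n) := by
  rw [Nat.cast_choose ℚ (by omega : n+1 ≤ 3*n+4), Nat.cast_choose ℚ (by omega : n ≤ 3*n+1),
    (by omega : 3*n+4 - (n+1) = 2*n+3), (by omega : 3*n+1 - n = 2*n+1)]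
  have e1 : ((3*n+4).factorial : ℚ) = (3*n+4)*(3*n+3)*(3*n+2)*(3*n+1).factorial := by
    rw [show 3*n+4 = 3*n+1+1+1+1 from by ring]
    simp [Nat.factorial_succ]; ring
  have e2 : ((n+1).factorial : ℚ) = (n+1)*(n.factorial) := by
    rw [Nat.factorial_succ]; push_cast; ring
  have e3 : ((2*n+3).factorial : ℚ) = (2*n+3)*(2*n+2)*(2*n+1).factorial := by
    rw [show 2*n+3 = 2*n+1+1+1 from by ring]
    simp [Nat.factorial_succ]; ring
  have h1 : ((n.factorial) : ℚ) ≠ 0 := by positivity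
  have h2 : (((2*n+1).factorial) : ℚ) ≠ 0 := by positivity
  have h3 : ((n:ℚ)+1) ≠ 0 := by positivity
  have h4 : (2*(n:ℚ)+3) ≠ 0 := by positivity
  have h5 : (2*(n:ℚ)+2) ≠ 0 := by positivity
  rw [e1, e2, e3]
  field_simp

theorem stmt_6 (t : PowerSeries ℚ) (h0 : constantCoeff t = 0)
    (ht : t * (1 - t) ^ 2 = X) (n : ℕ) :
    coeff (n + 1) t = (Nat.choose (3 * n + 1) n : ℚ) / (n + 1) := by
  have hD3 : (d⁄dX ℚ) (3:ℚ⟦X⟧) = 0 := by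
    rw [(by norm_num : (3:ℚ⟦X⟧) = ((3:ℕ):ℚ⟦X⟧)), Derivation.map_natCast]
  have hR1 : (d⁄dX ℚ t) * ((1-t)*(1-3*t)) = 1 := by
    have h := congrArg (d⁄dX ℚ) ht
    simp only [Derivation.leibniz, Derivation.leibniz_pow, map_sub, Derivation.map_one_eq_zero,
      derivative_X, smul_eq_mul, nsmul_eq_mul, map_zero] at h
    linear_combination h
  have hR2 : (d⁄dX ℚ (d⁄dX ℚ t)) * ((1-t)*(1-3*t)) = (d⁄dX ℚ t)^2 * (4-6*t) := by
    have h := congrArg (d⁄dX ℚ) hR1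
    simp only [Derivation.leibniz, map_sub, Derivation.map_one_eq_zero, hD3,
      smul_eq_mul, map_zero] at h
    linear_combination h
  have hGu : ((4*X - 27*X^2) * (d⁄dX ℚ (d⁄dX ℚ t)) + (2-27*X) * (d⁄dX ℚ t) + 3*t - 2)
      * ((1-t)*(1-3*t))^2 = 0 := by
    linear_combination ((4*X-27*X^2)*((1-t)*(1-3*t))) * hR2
      + ((4*X-27*X^2)*(4-6*t)*(d⁄dX ℚ t) + (2-27*X)*((1-t)*(1-3*t))
         + t*(4-3*t)*(4-6*t)*((1-t)*(1-3*t))) * hR1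
      + (27*((1-t)*(1-3*t)) - (4-6*t)*(d⁄dX ℚ t)*(4-27*X-27*t*(1-t)^2)) * ht
  have hu : ((1-t)*(1-3*t))^2 ≠ 0 := by
    intro h
    have h2 := congrArg (constantCoeff) h
    simp [h0] at h2
  have hG0 : (4*X - 27*X^2) * (d⁄dX ℚ (d⁄dX ℚ t)) + (2-27*X) * (d⁄dX ℚ t) + 3*t - 2 = 0 := by
    rcases mul_eq_zero.mp hGu with h | h
    · exact h
    · exact absurd h hu
  have hG' : C 4 * (X * (d⁄dX ℚ (d⁄dX ℚ t))) + C 2 * (d⁄dX ℚ t) + C 3 * t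
      = C 27 * (X^2 * (d⁄dX ℚ (d⁄dX ℚ t))) + C 27 * (X * (d⁄dX ℚ t)) + C 2 := by
    simp only [map_ofNat]
    linear_combination hG0
  have hc1 : coeff 1 t = 1 := by
    have h := congrArg (coeff 0) hG'
    simp only [map_add, coeff_C_mul, coeff_zero_X_mul, coeff_C, coeff_derivative,
      coeff_X_pow_mul', coeff_zero_eq_constantCoeff, h0] at h
    norm_num at h
    linarith
  have hrec : ∀ m : ℕ, 1 ≤ m →
      (2*((m:ℚ)+1)*(2*m+1)) * coeff (m+1) t = 3*(9*(m:ℚ)^2-1) * coeff m t := by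
    intro m hm
    match m, hm with
    | 1, _ =>
      have h := congrArg (coeff 1) hG'
      simp only [map_add, coeff_C_mul, coeff_succ_X_mul, coeff_C, coeff_derivative,
        coeff_X_pow_mul'] at h
      norm_num at h ⊢
      linarith
    | (k+2), _ =>
      have hx2 : coeff (k+1+1) ((X:ℚ⟦X⟧)^2 * (d⁄dX ℚ (d⁄dX ℚ t)))
          = coeff k (d⁄dX ℚ (d⁄dX ℚ t)) := coeff_X_pow_mul _ 2 k
      have h := congrArg (coeff (k+1+1)) hG'
      simp only [map_add, coeff_C_mul, coeff_succ_X_mul, hx2, coeff_C, coeff_derivative] at h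
      rw [show k+2 = k+1+1 from rfl]
      push_cast at h ⊢
      norm_num at h ⊢
      linear_combination h
  induction n with
  | zero => simpa using hc1
  | succ k ih =>
    have h := hrec (k+1) (by omega)
    have ih' : coeff (k+1) t * ((k:ℚ)+1) = ((3*k+1).choose k : ℚ) := by
      rw [ih]; push_cast; field_simp
    have key := aux_choose k
    have main : coeff (k+1+1) t * (2*((k:ℚ)+2)*(2*k+3)*((k:ℚ)+1))
        = 3*(3*(k:ℚ)+2)*(3*(k:ℚ)+4) * ((3*k+1).choose k : ℚ) := by
      push_cast at h
      linear_combination ((k:ℚ)+1)*h + (3*(9*((k:ℚ)+1)^2-1))*ih'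
    rw [show 3*(k+1)+1 = 3*k+4 from by ring]
    rw [eq_div_iff (by push_cast; positivity : (((k+1:ℕ)):ℚ)+1 ≠ 0)]
    push_cast
    have hnz : (2*(2*(k:ℚ)+3)*((k:ℚ)+1)) ≠ 0 := by positivity
    apply mul_right_cancel₀ hnz
    linear_combination main - key
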